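/- Assume Condition (C) with ℓ(θ) ≡ 1, and assume p_θ(1−) := sup_{0 ≤ r < 1} p_θ(r) < ∞ for every θ ∈ [0,2π); extend p_θ to [0,1] by p_θ(1) := p_θ(1−). Let U be a bounded Borel function on the closed unit disc B̄ which is continuous in the tree-topology, and let c ≥ U(0). For each θ let U⁽ᶜ⁾_θ(r) := inf{ φ(r) : φ : [0,1] → ℝ is p_θ-concave, φ ≥ U_θ on [0,1], φ(0) ≥ c }, and define U⁽ᶜ⁾ on B̄ ray-wise by U⁽ᶜ⁾(r,θ) := U⁽ᶜ⁾_θ(r). Then U⁽ᶜ⁾ is continuous on B̄ in the tree-topology; in particular U⁽ᶜ⁾(0) = c, U⁽ᶜ⁾(1,θ) = U(1,θ) for every θ, and sup_{θ ∈ [0,2π)} |U⁽ᶜ⁾_θ(r) − c| → 0 as r ↓ 0. -/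

import Mathlib

open MeasureTheory Set
open scoped Classical ENNReal

/-- `p′_θ(y) = exp(−2∫₀^y b(z,θ)/s(z,θ)² dz)`, the derivative of the radial scale function. -/
noncomputable def pprime (b s : ℝ → ℝ → ℝ) (θ y : ℝ) : ℝ :=
  Real.exp (-2 * ∫ z in (0:ℝ)..y, b z θ / (s z θ) ^ 2)

/-- The radial scale function `p_θ(r) = ∫₀^r p′_θ(y) dy`. -/
noncomputable def pscale (b s : ℝ → ℝ → ℝ) (θ r : ℝ) : ℝ :=
  ∫ y in (0:ℝ)..r, pprime b s θ y

/-- Condition (C): `ℓ` is measurable and bounded away from zero, `b` and `s` are Borel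
measurable on `Ǐ`, `s` vanishes nowhere on `Ǐ`, `b/s²` and `1/s²` are locally integrable
on `(0,ℓ(θ))` along each ray, and `(1+|b|)/s²` is bounded near the origin. -/
structure CondC (ℓ : ℝ → ℝ≥0∞) (b s : ℝ → ℝ → ℝ) : Prop where
  meas_ell : Measurable ℓ
  ell_pos : 0 < ⨅ θ ∈ Ico (0:ℝ) (2 * Real.pi), ℓ θ
  meas_b : Measurable
    (Set.restrict {q : ℝ × ℝ | 0 < q.1 ∧ ENNReal.ofReal q.1 < ℓ q.2 ∧
      q.2 ∈ Ico (0:ℝ) (2 * Real.pi)} (fun q => b q.1 q.2))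
  meas_s : Measurable
    (Set.restrict {q : ℝ × ℝ | 0 < q.1 ∧ ENNReal.ofReal q.1 < ℓ q.2 ∧
      q.2 ∈ Ico (0:ℝ) (2 * Real.pi)} (fun q => s q.1 q.2))
  s_ne : ∀ θ ∈ Ico (0:ℝ) (2 * Real.pi), ∀ r : ℝ, 0 < r → ENNReal.ofReal r < ℓ θ →
    s r θ ≠ 0
  loc_int_b : ∀ θ ∈ Ico (0:ℝ) (2 * Real.pi), ∀ r₁ r₂ : ℝ, 0 < r₁ → r₁ ≤ r₂ →
    ENNReal.ofReal r₂ < ℓ θ → IntegrableOn (fun z => b z θ / (s z θ) ^ 2) (Icc r₁ r₂)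
  loc_int_s : ∀ θ ∈ Ico (0:ℝ) (2 * Real.pi), ∀ r₁ r₂ : ℝ, 0 < r₁ → r₁ ≤ r₂ →
    ENNReal.ofReal r₂ < ℓ θ → IntegrableOn (fun z => 1 / (s z θ) ^ 2) (Icc r₁ r₂)
  bound_near_origin : ∃ η : ℝ, 0 < η ∧
    ENNReal.ofReal η < (⨅ θ ∈ Ico (0:ℝ) (2 * Real.pi), ℓ θ) ∧
    ∃ C : ℝ, ∀ θ ∈ Ico (0:ℝ) (2 * Real.pi), ∀ r ∈ Ioc (0:ℝ) η,
      (1 + |b r θ|) / (s r θ) ^ 2 ≤ C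

/-- Two points of the plane lie on the same ray emanating from the origin. -/
def OnSameRay (x y : EuclideanSpace ℝ (Fin 2)) : Prop :=
  x = 0 ∨ y = 0 ∨ ∃ t : ℝ, 0 < t ∧ y = t • x

/-- The tree-metric on the plane. -/
noncomputable def treeDist (x y : EuclideanSpace ℝ (Fin 2)) : ℝ :=
  if OnSameRay x y then |‖x‖ - ‖y‖| else ‖x‖ + ‖y‖

/-- The point of the plane with polar coordinates `(r, θ)`. -/
noncomputable def polar (r θ : ℝ) : EuclideanSpace ℝ (Fin 2) :=
  (WithLp.equiv 2 (Fin 2 → ℝ)).symm ![r * Real.cos θ, r * Real.sin θ]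

/-- The argument of a planar point, normalized to lie in `[0, 2π)`. -/
noncomputable def argOf (x : EuclideanSpace ℝ (Fin 2)) : ℝ :=
  if Complex.arg (⟨x 0, x 1⟩ : ℂ) < 0 then Complex.arg (⟨x 0, x 1⟩ : ℂ) + 2 * Real.pi
  else Complex.arg (⟨x 0, x 1⟩ : ℂ)

/-- The radial scale function extended to `[0,1]` by `p_θ(1) := p_θ(1−)`. -/
noncomputable def pbar (b s : ℝ → ℝ → ℝ) (θ r : ℝ) : ℝ :=
  if r < 1 then pscale b s θ r else sSup (pscale b s θ '' Ico (0:ℝ) 1)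

/-- A function `φ : [0,1] → ℝ` is `p`-concave if `φ = ψ ∘ p` on `[0,1]` for some
continuous concave function `ψ : [0, p(1)] → ℝ`. -/
def PConcave (p φ : ℝ → ℝ) : Prop :=
  ∃ ψ : ℝ → ℝ, ContinuousOn ψ (Icc 0 (p 1)) ∧ ConcaveOn ℝ (Icc 0 (p 1)) ψ ∧
    ∀ r ∈ Icc (0:ℝ) 1, φ r = ψ (p r)

/-- `U⁽ᶜ⁾_θ(r)`: the infimum over all `p_θ`-concave majorants `φ` of `U` along the ray
of angle `θ` with `φ(0) ≥ c`. -/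
noncomputable def UcTheta (b s : ℝ → ℝ → ℝ) (U : EuclideanSpace ℝ (Fin 2) → ℝ)
    (c θ r : ℝ) : ℝ :=
  sInf {y : ℝ | ∃ φ : ℝ → ℝ, PConcave (pbar b s θ) φ ∧
    (∀ t ∈ Icc (0:ℝ) 1, U (polar t θ) ≤ φ t) ∧ c ≤ φ 0 ∧ y = φ r}

/-- `U⁽ᶜ⁾` defined ray-wise on the closed unit disc. -/
noncomputable def UcDisc (b s : ℝ → ℝ → ℝ) (U : EuclideanSpace ℝ (Fin 2) → ℝ) (c : ℝ)
    (x : EuclideanSpace ℝ (Fin 2)) : ℝ :=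
  UcTheta b s U c (argOf x) ‖x‖

lemma polar_apply0 (r θ : ℝ) : polar r θ 0 = r * Real.cos θ := rfl
lemma polar_apply1 (r θ : ℝ) : polar r θ 1 = r * Real.sin θ := rfl

lemma norm_polar (r θ : ℝ) : ‖polar r θ‖ = |r| := by
  rw [EuclideanSpace.norm_eq]
  rw [Fin.sum_univ_two]
  rw [polar_apply0, polar_apply1]
  simp only [Real.norm_eq_abs, sq_abs]
  rw [show (r * Real.cos θ)^2 + (r * Real.sin θ)^2 = r^2 * ((Real.cos θ)^2 + (Real.sin θ)^2) by ring]
  rw [Real.cos_sq_add_sin_sq]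
  simp [Real.sqrt_sq_eq_abs]

lemma polar_zero (θ : ℝ) : polar 0 θ = 0 := by
  ext i
  fin_cases i <;> simp [polar]

lemma smul_polar (t r θ : ℝ) : t • polar r θ = polar (t * r) θ := by
  ext i
  fin_cases i <;> simp [polar, mul_assoc]

lemma argOf_mem (x : EuclideanSpace ℝ (Fin 2)) : argOf x ∈ Ico (0:ℝ) (2 * Real.pi) := by
  unfold argOf
  have h1 := Complex.arg_le_pi (⟨x 0, x 1⟩ : ℂ)
  have h2 := Complex.neg_pi_lt_arg (⟨x 0, x 1⟩ : ℂ)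
  have hpi := Real.pi_pos
  split_ifs with h
  · constructor <;> nlinarith
  · constructor <;> nlinarith

lemma norm_eq_abs_complex (x : EuclideanSpace ℝ (Fin 2)) :
    ‖x‖ = ‖(⟨x 0, x 1⟩ : ℂ)‖ := by
  rw [EuclideanSpace.norm_eq, Fin.sum_univ_two, Complex.norm_def, Complex.normSq_mk]
  simp [Real.norm_eq_abs, sq_abs, sq]

lemma polar_norm_argOf (x : EuclideanSpace ℝ (Fin 2)) : polar ‖x‖ (argOf x) = x := by
  by_cases hx : x = 0
  · simp [hx, polar_zero]
  have hz : (⟨x 0, x 1⟩ : ℂ) ≠ 0 := by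
    intro h
    apply hx
    ext i
    fin_cases i
    · simpa using congrArg Complex.re h
    · simpa using congrArg Complex.im h
  have habs : ‖(⟨x 0, x 1⟩ : ℂ)‖ ≠ 0 := norm_ne_zero_iff.mpr hz
  have hcos : Real.cos (argOf x) = Real.cos (Complex.arg (⟨x 0, x 1⟩ : ℂ)) := by
    unfold argOf; split_ifs <;> simp [Real.cos_add_two_pi]
  have hsin : Real.sin (argOf x) = Real.sin (Complex.arg (⟨x 0, x 1⟩ : ℂ)) := by
    unfold argOf; split_ifs <;> simp [Real.sin_add_two_pi]
  ext i
  fin_cases i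
  · show polar ‖x‖ (argOf x) 0 = x 0
    rw [polar_apply0, hcos, norm_eq_abs_complex, Complex.cos_arg hz]
    field_simp
  · show polar ‖x‖ (argOf x) 1 = x 1
    rw [polar_apply1, hsin, norm_eq_abs_complex, Complex.sin_arg]
    field_simp

lemma argOf_smul (t : ℝ) (ht : 0 < t) (x : EuclideanSpace ℝ (Fin 2)) :
    argOf (t • x) = argOf x := by
  have : (⟨(t • x) 0, (t • x) 1⟩ : ℂ) = (t : ℂ) * ⟨x 0, x 1⟩ := by
    apply Complex.ext <;> simp [Complex.ofReal]
  unfold argOf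
  rw [this, Complex.arg_real_mul _ ht]
set_option linter.unusedSectionVars false

section Analytic
variable {b s : ℝ → ℝ → ℝ}

lemma exists_etaC (h : CondC (fun _ => (1:ℝ≥0∞)) b s) :
    ∃ η C : ℝ, 0 < η ∧ η < 1 ∧ 0 ≤ C ∧
      ∀ θ ∈ Ico (0:ℝ) (2 * Real.pi), ∀ r ∈ Ioc (0:ℝ) η,
        (1 + |b r θ|) / (s r θ) ^ 2 ≤ C := by
  obtain ⟨η, hη, hηlt, C, hC⟩ := h.bound_near_origin
  have hIco : (0:ℝ) ∈ Ico (0:ℝ) (2 * Real.pi) := ⟨le_refl _, by positivity⟩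
  have hinf : (⨅ θ ∈ Ico (0:ℝ) (2 * Real.pi), (fun _ : ℝ => (1:ℝ≥0∞)) θ) = 1 := by
    apply le_antisymm
    · exact (iInf_le _ 0).trans (by simp [hIco])
    · exact le_iInf fun θ => le_iInf fun _ => le_refl _
  rw [hinf] at hηlt
  have hη1 : η < 1 := by
    by_contra hcon
    push_neg at hcon
    exact absurd hηlt (not_lt.2 (by simpa using ENNReal.one_le_ofReal.2 hcon))
  have hC0 : 0 ≤ C := le_trans (by positivity) (hC 0 hIco η ⟨hη, le_refl _⟩)
  exact ⟨η, C, hη, hη1, hC0, hC⟩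

lemma abs_bs_le (z : ℝ) (θ' : ℝ) : |b z θ' / (s z θ') ^ 2| ≤ (1 + |b z θ'|) / (s z θ') ^ 2 := by
  rw [abs_div, abs_pow, sq_abs]
  rcases eq_or_lt_of_le (sq_nonneg (s z θ')) with h0 | h0
  · rw [← h0]; simp
  · exact (div_le_div_iff_of_pos_right h0).2 (by linarith)

variable (h : CondC (fun _ => (1:ℝ≥0∞)) b s)
  {η C : ℝ} (hη : 0 < η) (hη1 : η < 1) (hC0 : 0 ≤ C)
  (hC : ∀ θ ∈ Ico (0:ℝ) (2 * Real.pi), ∀ r ∈ Ioc (0:ℝ) η,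
        (1 + |b r θ|) / (s r θ) ^ 2 ≤ C)
  {θ : ℝ} (hθ : θ ∈ Ico (0:ℝ) (2 * Real.pi))
include h hη hη1 hC0 hC hθ

lemma loc_int_b' (r₁ r₂ : ℝ) (h1 : 0 < r₁) (h12 : r₁ ≤ r₂) (h2 : r₂ < 1) :
    IntegrableOn (fun z => b z θ / (s z θ) ^ 2) (Icc r₁ r₂) := by
  refine h.loc_int_b θ hθ r₁ r₂ h1 h12 ?_
  simpa using ENNReal.ofReal_lt_one.2 h2

lemma intOn_b (y : ℝ) (hy : y < 1) :
    IntegrableOn (fun z => b z θ / (s z θ) ^ 2) (Ioc 0 y) := by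
  rcases le_or_gt y 0 with hy0 | hy0
  · rw [Ioc_eq_empty (by simpa using hy0)]
    exact integrableOn_empty
  -- first handle `y' = min y η`
  have key : ∀ y', 0 < y' → y' ≤ η → IntegrableOn (fun z => b z θ / (s z θ) ^ 2) (Ioc 0 y') := by
    intro y' hy'0 hy'η
    have hUnion : Ioc (0:ℝ) y' = ⋃ n : ℕ, Icc (y' / (n + 1)) y' := by
      ext z
      simp only [mem_Ioc, mem_iUnion, mem_Icc]
      constructor
      · rintro ⟨hz0, hzy⟩
        obtain ⟨n, hn⟩ := exists_nat_ge (y' / z)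
        refine ⟨n, ?_, hzy⟩
        rw [div_le_iff₀ (by positivity)]
        rw [div_le_iff₀ hz0] at hn
        nlinarith
      · rintro ⟨n, hn1, hn2⟩
        exact ⟨lt_of_lt_of_le (by positivity) hn1, hn2⟩
    have hmeas : AEStronglyMeasurable (fun z => b z θ / (s z θ) ^ 2)
        (volume.restrict (Ioc 0 y')) := by
      rw [hUnion]
      rw [aestronglyMeasurable_iUnion_iff]
      intro n
      have hle : y' / (n + 1) ≤ y' := by
        rw [div_le_iff₀ (by positivity)]
        nlinarith
      exact (loc_int_b' h hη hη1 hC0 hC hθ (y' / (n+1)) y' (by positivity) hle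
        (lt_of_le_of_lt hy'η hη1)).aestronglyMeasurable
    refine Integrable.mono' (g := fun _ => C) ?_ hmeas ?_
    · exact integrableOn_const measure_Ioc_lt_top.ne
    · rw [ae_restrict_iff' measurableSet_Ioc]
      filter_upwards with z hz
      refine le_trans (abs_bs_le z θ) (hC θ hθ z ⟨hz.1, le_trans hz.2 hy'η⟩)
  rcases le_or_gt y η with hyη | hyη
  · exact key y hy0 hyη
  · have h1 : IntegrableOn (fun z => b z θ / (s z θ) ^ 2) (Ioc 0 η) := key η hη le_rfl
    have h2 : IntegrableOn (fun z => b z θ / (s z θ) ^ 2) (Ioc η y) :=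
      (loc_int_b' h hη hη1 hC0 hC hθ η y hη hyη.le hy).mono_set Ioc_subset_Icc_self
    have : Ioc (0:ℝ) y = Ioc 0 η ∪ Ioc η y := (Ioc_union_Ioc_eq_Ioc hη.le hyη.le).symm
    rw [this]
    exact h1.union h2

lemma intervalIntegrable_b (y : ℝ) (hy0 : 0 ≤ y) (hy : y < 1) :
    IntervalIntegrable (fun z => b z θ / (s z θ) ^ 2) volume 0 y := by
  rw [intervalIntegrable_iff_integrableOn_Ioc_of_le hy0]
  exact intOn_b h hη hη1 hC0 hC hθ y hy

lemma absI_le (y : ℝ) (hy : y ∈ Icc 0 η) :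
    |∫ z in (0:ℝ)..y, b z θ / (s z θ) ^ 2| ≤ C * y := by
  have := intervalIntegral.norm_integral_le_of_norm_le_const
    (f := fun z => b z θ / (s z θ) ^ 2) (a := 0) (b := y) (C := C) ?_
  · simpa [abs_of_nonneg hy.1] using this
  · intro x hx
    rw [uIoc_of_le hy.1] at hx
    exact le_trans (abs_bs_le x θ) (hC θ hθ x ⟨hx.1, le_trans hx.2 hy.2⟩)

lemma pprime_bounds (y : ℝ) (hy : y ∈ Icc 0 η) :
    Real.exp (-(2 * C * η)) ≤ pprime b s θ y ∧ pprime b s θ y ≤ Real.exp (2 * C * η) := by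
  have habs := absI_le h hη hη1 hC0 hC hθ y hy
  have h1 : |(-2) * ∫ z in (0:ℝ)..y, b z θ / (s z θ) ^ 2| ≤ 2 * C * η := by
    rw [abs_mul]
    have : C * y ≤ C * η := by nlinarith [hy.2]
    simp only [abs_neg, abs_two]
    nlinarith [abs_nonneg (∫ z in (0:ℝ)..y, b z θ / (s z θ) ^ 2)]
  rw [abs_le] at h1
  exact ⟨Real.exp_le_exp.2 h1.1, Real.exp_le_exp.2 h1.2⟩

lemma pprime_pos (y : ℝ) : 0 < pprime b s θ y := Real.exp_pos _

lemma pprime_cont (m : ℝ) (hm0 : 0 ≤ m) (hm : m < 1) :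
    ContinuousOn (pprime b s θ) (Icc 0 m) := by
  have hint : IntegrableOn (fun z => b z θ / (s z θ) ^ 2) (uIcc 0 m) := by
    rw [uIcc_of_le hm0, integrableOn_Icc_iff_integrableOn_Ioc]
    exact intOn_b h hη hη1 hC0 hC hθ m hm
  have hcont := intervalIntegral.continuousOn_primitive_interval (a := 0) (b := m) hint
  rw [uIcc_of_le hm0] at hcont
  exact Real.continuous_exp.comp_continuousOn (continuousOn_const.mul hcont)

lemma pprime_intervalIntegrable (y : ℝ) (hy0 : 0 ≤ y) (hy : y < 1) :
    IntervalIntegrable (pprime b s θ) volume 0 y := by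
  apply ContinuousOn.intervalIntegrable
  rw [uIcc_of_le hy0]
  exact pprime_cont h hη hη1 hC0 hC hθ y hy0 hy

lemma pscale_cont (m : ℝ) (hm0 : 0 ≤ m) (hm : m < 1) :
    ContinuousOn (pscale b s θ) (Icc 0 m) := by
  have hint : IntegrableOn (pprime b s θ) (uIcc 0 m) := by
    rw [uIcc_of_le hm0]
    exact (pprime_cont h hη hη1 hC0 hC hθ m hm0 hm).integrableOn_Icc
  have := intervalIntegral.continuousOn_primitive_interval (a := 0) (b := m) hint
  rw [uIcc_of_le hm0] at this
  exact this

omit h hη hη1 hC0 hC hθ in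
lemma pscale_zero : pscale b s θ 0 = 0 := intervalIntegral.integral_same

lemma pscale_strict_mono (r r' : ℝ) (hr0 : 0 ≤ r) (hrr : r < r') (hr1 : r' < 1) :
    pscale b s θ r < pscale b s θ r' := by
  have h1 := pprime_intervalIntegrable h hη hη1 hC0 hC hθ r hr0 (hrr.trans hr1)
  have h2 : IntervalIntegrable (pprime b s θ) volume r r' := by
    apply ContinuousOn.intervalIntegrable
    apply (pprime_cont h hη hη1 hC0 hC hθ r' (hr0.trans hrr.le) hr1).mono
    rw [uIcc_of_le hrr.le]
    exact Icc_subset_Icc hr0 le_rfl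
  have hadd := intervalIntegral.integral_add_adjacent_intervals h1 h2
  have hpos : 0 < ∫ y in r..r', pprime b s θ y :=
    intervalIntegral.intervalIntegral_pos_of_pos_on h2
      (fun x _ => pprime_pos h hη hη1 hC0 hC hθ x) hrr
  show pscale b s θ r < pscale b s θ r'
  unfold pscale
  rw [← hadd]
  linarith

lemma pscale_mono (r r' : ℝ) (hr0 : 0 ≤ r) (hrr : r ≤ r') (hr1 : r' < 1) :
    pscale b s θ r ≤ pscale b s θ r' := by
  rcases eq_or_lt_of_le hrr with rfl | hlt
  · exact le_rfl
  · exact (pscale_strict_mono h hη hη1 hC0 hC hθ r r' hr0 hlt hr1).le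

lemma pscale_nonneg (r : ℝ) (hr0 : 0 ≤ r) (hr1 : r < 1) : 0 ≤ pscale b s θ r := by
  have := pscale_mono h hη hη1 hC0 hC hθ 0 r le_rfl hr0 hr1
  rwa [pscale_zero (b:=b) (s:=s) (θ:=θ)] at this

lemma pscale_bounds (r : ℝ) (hr : r ∈ Icc 0 η) :
    r * Real.exp (-(2 * C * η)) ≤ pscale b s θ r ∧
      pscale b s θ r ≤ r * Real.exp (2 * C * η) := by
  have hint := pprime_intervalIntegrable h hη hη1 hC0 hC hθ r hr.1 (lt_of_le_of_lt hr.2 hη1)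
  constructor
  · have := intervalIntegral.integral_mono_on (a := 0) (b := r) (μ := volume)
      (f := fun _ => Real.exp (-(2 * C * η))) (g := pprime b s θ) hr.1
      (intervalIntegrable_const) hint
      (fun x hx => (pprime_bounds h hη hη1 hC0 hC hθ x
        ⟨hx.1, hx.2.trans hr.2⟩).1)
    simpa [mul_comm, pscale] using this
  · have := intervalIntegral.integral_mono_on (a := 0) (b := r) (μ := volume)
      (f := pprime b s θ) (g := fun _ => Real.exp (2 * C * η)) hr.1
      hint (intervalIntegrable_const)
      (fun x hx => (pprime_bounds h hη hη1 hC0 hC hθ x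
        ⟨hx.1, hx.2.trans hr.2⟩).2)
    simpa [mul_comm, pscale] using this

end Analytic
section Pbar
variable {b s : ℝ → ℝ → ℝ}
  (h : CondC (fun _ => (1:ℝ≥0∞)) b s)
  {η C : ℝ} (hη : 0 < η) (hη1 : η < 1) (hC0 : 0 ≤ C)
  (hC : ∀ θ ∈ Ico (0:ℝ) (2 * Real.pi), ∀ r ∈ Ioc (0:ℝ) η,
        (1 + |b r θ|) / (s r θ) ^ 2 ≤ C)
  (hfin : ∀ θ ∈ Ico (0:ℝ) (2 * Real.pi), BddAbove (pscale b s θ '' Ico (0:ℝ) 1))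
  {θ : ℝ} (hθ : θ ∈ Ico (0:ℝ) (2 * Real.pi))
include h hη hη1 hC0 hC hfin hθ

omit h hη hη1 hC0 hC hfin hθ in
lemma pbar_of_lt {r : ℝ} (hr : r < 1) : pbar b s θ r = pscale b s θ r := if_pos hr

omit h hη hη1 hC0 hC hfin hθ in
lemma pbar_zero : pbar b s θ 0 = 0 := by
  rw [pbar_of_lt one_pos, pscale_zero]

omit h hη hη1 hC0 hC hfin hθ in
lemma pbar_one : pbar b s θ 1 = sSup (pscale b s θ '' Ico (0:ℝ) 1) := if_neg (lt_irrefl 1)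

omit h hη hη1 hC0 hC in
lemma pscale_le_pbar_one {r : ℝ} (hr : r ∈ Ico (0:ℝ) 1) :
    pscale b s θ r ≤ pbar b s θ 1 := by
  rw [pbar_one]
  exact le_csSup (hfin θ hθ) ⟨r, hr, rfl⟩

omit h hη hη1 hC0 hC in
lemma pbar_le_pbar_one {r : ℝ} (hr : r ∈ Icc (0:ℝ) 1) :
    pbar b s θ r ≤ pbar b s θ 1 := by
  rcases eq_or_lt_of_le hr.2 with rfl | hlt
  · exact le_rfl
  · rw [pbar_of_lt hlt]
    exact pscale_le_pbar_one hfin hθ ⟨hr.1, hlt⟩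

lemma pbar_nonneg {r : ℝ} (hr : r ∈ Icc (0:ℝ) 1) : 0 ≤ pbar b s θ r := by
  rcases eq_or_lt_of_le hr.2 with rfl | hlt
  · have := pscale_le_pbar_one hfin hθ (r := 0) ⟨le_rfl, one_pos⟩
    rwa [pscale_zero] at this
  · rw [pbar_of_lt hlt]
    exact pscale_nonneg h hη hη1 hC0 hC hθ r hr.1 hlt

lemma pbar_mono {r r' : ℝ} (hr : 0 ≤ r) (hrr : r ≤ r') (hr1 : r' ≤ 1) :
    pbar b s θ r ≤ pbar b s θ r' := by
  rcases eq_or_lt_of_le hr1 with rfl | hlt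
  · exact pbar_le_pbar_one hfin hθ ⟨hr, hrr⟩
  · rw [pbar_of_lt hlt, pbar_of_lt (lt_of_le_of_lt hrr hlt)]
    exact pscale_mono h hη hη1 hC0 hC hθ r r' hr hrr hlt

lemma pbar_mem_Icc {r : ℝ} (hr : r ∈ Icc (0:ℝ) 1) :
    pbar b s θ r ∈ Icc 0 (pbar b s θ 1) :=
  ⟨pbar_nonneg h hη hη1 hC0 hC hfin hθ hr, pbar_le_pbar_one hfin hθ hr⟩

lemma pbar_lt_pbar_one {r : ℝ} (hr0 : 0 ≤ r) (hr1 : r < 1) :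
    pbar b s θ r < pbar b s θ 1 := by
  rw [pbar_of_lt hr1]
  have hmid : r < (r + 1) / 2 := by linarith
  have hmid1 : (r + 1) / 2 < 1 := by linarith
  calc pscale b s θ r < pscale b s θ ((r + 1) / 2) :=
        pscale_strict_mono h hη hη1 hC0 hC hθ r _ hr0 hmid hmid1
    _ ≤ pbar b s θ 1 := pscale_le_pbar_one hfin hθ ⟨by linarith, hmid1⟩

lemma eta_le_pbar_one : η * Real.exp (-(2 * C * η)) ≤ pbar b s θ 1 := by
  have h1 := (pscale_bounds h hη hη1 hC0 hC hθ η ⟨hη.le, le_rfl⟩).1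
  exact h1.trans (pscale_le_pbar_one hfin hθ ⟨hη.le, hη1⟩)

lemma pbar_one_pos : 0 < pbar b s θ 1 :=
  lt_of_lt_of_le (by positivity) (eta_le_pbar_one h hη hη1 hC0 hC hfin hθ)

lemma pbar_small_upper {r : ℝ} (hr : r ∈ Icc 0 η) :
    pbar b s θ r ≤ r * Real.exp (2 * C * η) := by
  rw [pbar_of_lt (lt_of_le_of_lt hr.2 hη1)]
  exact (pscale_bounds h hη hη1 hC0 hC hθ r hr).2

lemma pbar_sup_approx {ε : ℝ} (hε : 0 < ε) :
    ∃ t₀ ∈ Ico (0:ℝ) 1, pbar b s θ 1 - ε < pscale b s θ t₀ := by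
  rw [pbar_one]
  have hne : (pscale b s θ '' Ico (0:ℝ) 1).Nonempty := ⟨_, ⟨0, ⟨le_rfl, one_pos⟩, rfl⟩⟩
  obtain ⟨a, ⟨t₀, ht₀, rfl⟩, hlt⟩ := exists_lt_of_lt_csSup hne
    (sub_lt_self _ hε)
  exact ⟨t₀, ht₀, hlt⟩

end Pbar

/-- A majorant datum along the ray of angle `θ`. -/
def Valid (b s : ℝ → ℝ → ℝ) (U : EuclideanSpace ℝ (Fin 2) → ℝ) (c θ : ℝ) (ψ : ℝ → ℝ) : Prop :=
  ContinuousOn ψ (Icc 0 (pbar b s θ 1)) ∧ ConcaveOn ℝ (Icc 0 (pbar b s θ 1)) ψ ∧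
  (∀ t ∈ Icc (0:ℝ) 1, U (polar t θ) ≤ ψ (pbar b s θ t)) ∧ c ≤ ψ 0

lemma ucSet_eq (b s : ℝ → ℝ → ℝ) (U : EuclideanSpace ℝ (Fin 2) → ℝ) (c θ r : ℝ)
    (hr : r ∈ Icc (0:ℝ) 1) :
    {y : ℝ | ∃ φ : ℝ → ℝ, PConcave (pbar b s θ) φ ∧
      (∀ t ∈ Icc (0:ℝ) 1, U (polar t θ) ≤ φ t) ∧ c ≤ φ 0 ∧ y = φ r} =
    {y : ℝ | ∃ ψ : ℝ → ℝ, Valid b s U c θ ψ ∧ y = ψ (pbar b s θ r)} := by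
  ext y
  simp only [mem_setOf_eq]
  constructor
  · rintro ⟨φ, ⟨ψ, hcont, hconc, heq⟩, hmaj, hc0, rfl⟩
    refine ⟨ψ, ⟨hcont, hconc, ?_, ?_⟩, ?_⟩
    · intro t ht
      rw [← heq t ht]
      exact hmaj t ht
    · rw [← pbar_zero (b := b) (s := s) (θ := θ), ← heq 0 ⟨le_rfl, zero_le_one⟩]
      exact hc0
    · exact heq r hr
  · rintro ⟨ψ, ⟨hcont, hconc, hmaj, hc0⟩, rfl⟩
    refine ⟨fun t => ψ (pbar b s θ t), ⟨ψ, hcont, hconc, fun _ _ => rfl⟩, hmaj, ?_, rfl⟩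
    show c ≤ ψ (pbar b s θ 0)
    rw [pbar_zero]
    exact hc0

lemma ucTheta_eq (b s : ℝ → ℝ → ℝ) (U : EuclideanSpace ℝ (Fin 2) → ℝ) (c θ r : ℝ)
    (hr : r ∈ Icc (0:ℝ) 1) :
    UcTheta b s U c θ r =
      sInf {y : ℝ | ∃ ψ : ℝ → ℝ, Valid b s U c θ ψ ∧ y = ψ (pbar b s θ r)} := by
  rw [UcTheta, ucSet_eq b s U c θ r hr]

/-- Chord bound for concave functions. -/
lemma chord_bound {L m₀ A₁ : ℝ} {ψ : ℝ → ℝ} (hψ : ConcaveOn ℝ (Icc 0 L) ψ)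
    (h0 : m₀ ≤ ψ 0) (hL : m₀ ≤ ψ L) {x y : ℝ} (hx : x ∈ Ioo 0 L) (hy : y ∈ Icc 0 L)
    (hxA : ψ x ≤ A₁) (hA : m₀ ≤ A₁) :
    ψ y ≤ ψ x + |y - x| * (A₁ - m₀) / min x (L - x) := by
  have hL0 : (0:ℝ) < L := lt_trans hx.1 hx.2
  have hmn : 0 < min x (L - x) := lt_min hx.1 (by linarith [hx.2])
  rcases lt_trichotomy y x with hlt | rfl | hgt
  · -- y < x : x is a combination of y and L
    have hLy : 0 < L - y := by linarith [hx.2]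
    have ha : 0 ≤ (L - x) / (L - y) := by
      apply div_nonneg <;> linarith [hx.2]
    have hb : 0 ≤ (x - y) / (L - y) := by
      apply div_nonneg <;> linarith
    have hab : (L - x) / (L - y) + (x - y) / (L - y) = 1 := by
      field_simp
      ring
    have hcc := hψ.2 hy (⟨hL0.le, le_rfl⟩ : L ∈ Icc 0 L) ha hb hab
    simp only [smul_eq_mul] at hcc
    have hcombo : (L - x) / (L - y) * y + (x - y) / (L - y) * L = x := by
      field_simp
      ring
    rw [hcombo] at hcc
    have e1 : (L - y) * ((L - x) / (L - y) * ψ y + (x - y) / (L - y) * ψ L)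
        = (L - x) * ψ y + (x - y) * ψ L := by
      field_simp
    have h1 : (L - x) * ψ y + (x - y) * ψ L ≤ (L - y) * ψ x := by
      have h2 := mul_le_mul_of_nonneg_left hcc hLy.le
      linarith [e1, h2]
    have key : (L - x) * (ψ y - ψ x) ≤ (x - y) * (A₁ - m₀) := by nlinarith [hL]
    have step : ψ y - ψ x ≤ (x - y) * (A₁ - m₀) / (L - x) := by
      rw [le_div_iff₀ (by linarith [hx.2])]
      linarith [key]
    have step2 : (x - y) * (A₁ - m₀) / (L - x) ≤ (x - y) * (A₁ - m₀) / min x (L - x) :=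
      div_le_div_of_nonneg_left (by nlinarith) hmn (min_le_right _ _)
    rw [abs_of_neg (by linarith : y - x < 0), show -(y - x) = x - y by ring]
    linarith
  · simp only [sub_self, abs_zero, zero_mul, zero_div, add_zero]
    linarith
  · -- x < y : x is a combination of 0 and y
    have hy0 : 0 < y := lt_trans hx.1 hgt
    have ha : 0 ≤ (y - x) / y := by
      apply div_nonneg <;> linarith
    have hb : 0 ≤ x / y := by
      apply div_nonneg <;> linarith [hx.1]
    have hab : (y - x) / y + x / y = 1 := by field_simp; ring
    have hcc := hψ.2 (⟨le_rfl, hL0.le⟩ : (0:ℝ) ∈ Icc 0 L) hy ha hb hab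
    simp only [smul_eq_mul] at hcc
    have hcombo : (y - x) / y * 0 + x / y * y = x := by
      field_simp
      ring
    rw [hcombo] at hcc
    have e1 : y * ((y - x) / y * ψ 0 + x / y * ψ y) = (y - x) * ψ 0 + x * ψ y := by
      field_simp
    have h1 : (y - x) * ψ 0 + x * ψ y ≤ y * ψ x := by
      have h2 := mul_le_mul_of_nonneg_left hcc hy0.le
      linarith [e1, h2]
    have key : x * (ψ y - ψ x) ≤ (y - x) * (A₁ - m₀) := by nlinarith [h0]
    have step : ψ y - ψ x ≤ (y - x) * (A₁ - m₀) / x := by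
      rw [le_div_iff₀ hx.1]
      linarith [key]
    have step2 : (y - x) * (A₁ - m₀) / x ≤ (y - x) * (A₁ - m₀) / min x (L - x) :=
      div_le_div_of_nonneg_left (by nlinarith) hmn (min_le_left _ _)
    rw [abs_of_pos (by linarith : (0:ℝ) < y - x)]
    linarith
lemma concaveOn_affine (k d : ℝ) {S : Set ℝ} (hS : Convex ℝ S) :
    ConcaveOn ℝ S (fun x => k * x + d) := by
  refine ⟨hS, ?_⟩
  intro x hx y hy a b' ha hb hab
  simp only [smul_eq_mul]
  have : a * (k * x + d) + b' * (k * y + d) = k * (a * x + b' * y) + (a + b') * d := by ring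
  rw [this, hab]
  simp [le_refl]

section Major
variable {b s : ℝ → ℝ → ℝ}
  (h : CondC (fun _ => (1:ℝ≥0∞)) b s)
  {η C : ℝ} (hη : 0 < η) (hη1 : η < 1) (hC0 : 0 ≤ C)
  (hC : ∀ θ ∈ Ico (0:ℝ) (2 * Real.pi), ∀ r ∈ Ioc (0:ℝ) η,
        (1 + |b r θ|) / (s r θ) ^ 2 ≤ C)
  (hfin : ∀ θ ∈ Ico (0:ℝ) (2 * Real.pi), BddAbove (pscale b s θ '' Ico (0:ℝ) 1))
  {θ : ℝ} (hθ : θ ∈ Ico (0:ℝ) (2 * Real.pi))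
  {U : EuclideanSpace ℝ (Fin 2) → ℝ} {M : ℝ}
  (hM : ∀ x : EuclideanSpace ℝ (Fin 2), ‖x‖ ≤ 1 → |U x| ≤ M)
  {c : ℝ} (hc : U 0 ≤ c)
include h hη hη1 hC0 hC hfin hθ hM hc

omit h hη hη1 hC0 hC hfin hθ hc in
lemma abs_U_polar_le {t : ℝ} (ht : t ∈ Icc (0:ℝ) 1) : |U (polar t θ)| ≤ M := by
  apply hM
  rw [norm_polar, abs_of_nonneg ht.1]
  exact ht.2

omit h hη hη1 hC0 hC hfin hθ hc in
lemma M_nonneg : 0 ≤ M := le_trans (abs_nonneg _) (hM 0 (by simp))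

lemma valid_const : Valid b s U c θ (fun _ => max c M) := by
  refine ⟨continuousOn_const, concaveOn_const _ (convex_Icc _ _), ?_, le_max_left _ _⟩
  intro t ht
  exact le_trans (le_of_abs_le (abs_U_polar_le hM ht)) (le_max_right _ _)

lemma valid_lb {ψ : ℝ → ℝ} (hψ : Valid b s U c θ ψ) {x : ℝ}
    (hx : x ∈ Icc 0 (pbar b s θ 1)) : min c (-M) ≤ ψ x := by
  have hP0 : (0:ℝ) ≤ pbar b s θ 1 := (pbar_one_pos h hη hη1 hC0 hC hfin hθ).le
  have hseg : x ∈ segment ℝ (0:ℝ) (pbar b s θ 1) := by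
    rw [segment_eq_Icc hP0]; exact hx
  have hmin := hψ.2.1.ge_on_segment ⟨le_rfl, hP0⟩ ⟨hP0, le_rfl⟩ hseg
  have h1 : c ≤ ψ 0 := hψ.2.2.2
  have h2 : -M ≤ ψ (pbar b s θ 1) := by
    have := hψ.2.2.1 1 ⟨zero_le_one, le_rfl⟩
    have habs := abs_U_polar_le (θ := θ) hM (t := 1) ⟨zero_le_one, le_rfl⟩
    linarith [neg_abs_le (U (polar 1 θ))]
  calc min c (-M) ≤ min (ψ 0) (ψ (pbar b s θ 1)) := le_min
        ((min_le_left _ _).trans h1) ((min_le_right _ _).trans h2)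
    _ ≤ ψ x := hmin

lemma ucSet_nonempty (r : ℝ) :
    (max c M) ∈ {y : ℝ | ∃ ψ : ℝ → ℝ, Valid b s U c θ ψ ∧ y = ψ (pbar b s θ r)} :=
  ⟨fun _ => max c M, valid_const h hη hη1 hC0 hC hfin hθ hM hc, rfl⟩

lemma ucSet_bddBelow {r : ℝ} (hr : r ∈ Icc (0:ℝ) 1) :
    BddBelow {y : ℝ | ∃ ψ : ℝ → ℝ, Valid b s U c θ ψ ∧ y = ψ (pbar b s θ r)} := by
  refine ⟨min c (-M), ?_⟩
  rintro y ⟨ψ, hψ, rfl⟩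
  exact valid_lb h hη hη1 hC0 hC hfin hθ hM hc hψ
    (pbar_mem_Icc h hη hη1 hC0 hC hfin hθ hr)

lemma ucTheta_le_valid {r : ℝ} (hr : r ∈ Icc (0:ℝ) 1) {ψ : ℝ → ℝ}
    (hψ : Valid b s U c θ ψ) : UcTheta b s U c θ r ≤ ψ (pbar b s θ r) := by
  rw [ucTheta_eq b s U c θ r hr]
  exact csInf_le (ucSet_bddBelow h hη hη1 hC0 hC hfin hθ hM hc hr) ⟨ψ, hψ, rfl⟩

lemma ucTheta_le_max {r : ℝ} (hr : r ∈ Icc (0:ℝ) 1) :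
    UcTheta b s U c θ r ≤ max c M :=
  ucTheta_le_valid h hη hη1 hC0 hC hfin hθ hM hc hr
    (valid_const h hη hη1 hC0 hC hfin hθ hM hc)

lemma min_le_ucTheta {r : ℝ} (hr : r ∈ Icc (0:ℝ) 1) :
    min c (-M) ≤ UcTheta b s U c θ r := by
  rw [ucTheta_eq b s U c θ r hr]
  refine le_csInf ⟨_, ucSet_nonempty h hη hη1 hC0 hC hfin hθ hM hc r⟩ ?_
  rintro y ⟨ψ, hψ, rfl⟩
  exact valid_lb h hη hη1 hC0 hC hfin hθ hM hc hψ
    (pbar_mem_Icc h hη hη1 hC0 hC hfin hθ hr)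

lemma exists_valid_lt {r : ℝ} (hr : r ∈ Icc (0:ℝ) 1) {ε : ℝ} (hε : 0 < ε) :
    ∃ ψ : ℝ → ℝ, Valid b s U c θ ψ ∧
      ψ (pbar b s θ r) < UcTheta b s U c θ r + ε := by
  have hne : {y : ℝ | ∃ ψ : ℝ → ℝ, Valid b s U c θ ψ ∧ y = ψ (pbar b s θ r)}.Nonempty :=
    ⟨_, ucSet_nonempty h hη hη1 hC0 hC hfin hθ hM hc r⟩
  have hlt : sInf {y : ℝ | ∃ ψ : ℝ → ℝ, Valid b s U c θ ψ ∧ y = ψ (pbar b s θ r)} <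
      UcTheta b s U c θ r + ε := by
    rw [← ucTheta_eq b s U c θ r hr]
    linarith
  obtain ⟨y, ⟨ψ, hψ, rfl⟩, hy⟩ := exists_lt_of_csInf_lt hne hlt
  exact ⟨ψ, hψ, hy⟩

end Major
lemma cancel_aux {a ε : ℝ} (ha : a ≠ 0) : a * (ε/(2*a)) = ε/2 := by
  field_simp

section D1
variable {b s : ℝ → ℝ → ℝ}
  (h : CondC (fun _ => (1:ℝ≥0∞)) b s)
  {η C : ℝ} (hη : 0 < η) (hη1 : η < 1) (hC0 : 0 ≤ C)
  (hC : ∀ θ ∈ Ico (0:ℝ) (2 * Real.pi), ∀ r ∈ Ioc (0:ℝ) η,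
        (1 + |b r θ|) / (s r θ) ^ 2 ≤ C)
  (hfin : ∀ θ ∈ Ico (0:ℝ) (2 * Real.pi), BddAbove (pscale b s θ '' Ico (0:ℝ) 1))
  {U : EuclideanSpace ℝ (Fin 2) → ℝ} {M : ℝ}
  (hM : ∀ x : EuclideanSpace ℝ (Fin 2), ‖x‖ ≤ 1 → |U x| ≤ M)
  {c : ℝ} (hc : U 0 ≤ c)
  (hU0 : ∀ ε > (0:ℝ), ∃ δ > (0:ℝ), ∀ θ' : ℝ, ∀ t ∈ Icc (0:ℝ) 1, t < δ →
    |U (polar t θ') - U 0| < ε)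
include h hη hη1 hC0 hC hfin hM hc hU0

lemma near_zero : ∀ ε > (0:ℝ), ∃ δ > (0:ℝ), δ ≤ 1 ∧
    ∀ θ' ∈ Ico (0:ℝ) (2 * Real.pi), ∀ r ∈ Icc (0:ℝ) 1, r < δ →
      |UcTheta b s U c θ' r - c| < ε := by
  intro ε hε
  obtain ⟨δ₁, hδ₁, hU0'⟩ := hU0 (ε/2) (by linarith)
  set δ'' := min (δ₁/2) (η/2) with hδ''def
  have hδ''pos : 0 < δ'' := lt_min (by linarith) (by linarith)
  have hδ''δ₁ : δ'' < δ₁ := lt_of_le_of_lt (min_le_left _ _) (by linarith)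
  have hδ''η : δ'' ≤ η := (min_le_right _ _).trans (by linarith)
  have hδ''1 : δ'' < 1 := lt_of_le_of_lt hδ''η hη1
  set A := max c M with hA
  have hcA : c ≤ A := le_max_left _ _
  have hMA : M ≤ A := le_max_right _ _
  set eplus := Real.exp (2*C*η) with heplus
  set eminus := Real.exp (-(2*C*η)) with heminus
  have heppos : 0 < eplus := Real.exp_pos _
  have hempos : 0 < eminus := Real.exp_pos _
  set D₁ := (A + 1 - c) * eplus / (δ'' * eminus) with hD₁def
  have hD₁0 : 0 ≤ D₁ := by
    apply div_nonneg (by nlinarith) (by positivity)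
  set B := max 0 (c + M) with hBdef
  have hB0 : 0 ≤ B := le_max_left _ _
  set D₂ := B * eplus / (η * eminus) with hD₂def
  have hD₂0 : 0 ≤ D₂ := by positivity
  refine ⟨min (min δ'' 1) (ε/(2*(D₁+D₂+1))), ?_, ?_, ?_⟩
  · apply lt_min (lt_min hδ''pos one_pos) (by positivity)
  · exact (min_le_left _ _).trans (min_le_right _ _)
  intro θ' hθ' r hr hrδ
  have hrδ'' : r < δ'' := lt_of_lt_of_le hrδ ((min_le_left _ _).trans (min_le_left _ _))
  have hrη : r ∈ Icc 0 η := ⟨hr.1, (hrδ''.le.trans hδ''η)⟩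
  have hrsmall : r < ε/(2*(D₁+D₂+1)) := lt_of_lt_of_le hrδ (min_le_right _ _)
  -- upper bound via affine majorant
  have hpδ : δ'' * eminus ≤ pscale b s θ' δ'' :=
    (pscale_bounds h hη hη1 hC0 hC hθ' δ'' ⟨hδ''pos.le, hδ''η⟩).1
  have hpδpos : 0 < pscale b s θ' δ'' := lt_of_lt_of_le (by positivity) hpδ
  set K := (A + 1 - c) / pscale b s θ' δ'' with hKdef
  have hK0 : 0 ≤ K := div_nonneg (by nlinarith) hpδpos.le
  have hvalid : Valid b s U c θ' (fun x => K * x + (c + ε/2)) := by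
    refine ⟨(by fun_prop), concaveOn_affine _ _ (convex_Icc _ _), ?_, by simp; linarith⟩
    intro t ht
    rcases le_or_gt t δ'' with htle | htgt
    · have hUt := hU0' θ' t ht (lt_of_le_of_lt htle hδ''δ₁)
      have h1 : U (polar t θ') ≤ c + ε/2 := by
        have := abs_sub_lt_iff.1 hUt
        linarith [this.1]
      have h2 : 0 ≤ pbar b s θ' t := pbar_nonneg h hη hη1 hC0 hC hfin hθ' ht
      have h3 := mul_nonneg hK0 h2
      show U (polar t θ') ≤ K * pbar b s θ' t + (c + ε/2)
      linarith
    · have h2 : pscale b s θ' δ'' ≤ pbar b s θ' t := by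
        rw [← pbar_of_lt (b := b) (s := s) (θ := θ') hδ''1]
        exact pbar_mono h hη hη1 hC0 hC hfin hθ' hδ''pos.le htgt.le ht.2
      have h3 : K * pscale b s θ' δ'' = A + 1 - c := div_mul_cancel₀ _ hpδpos.ne'
      have h4 : U (polar t θ') ≤ M := le_of_abs_le (abs_U_polar_le hM ht)
      have h5 := mul_le_mul_of_nonneg_left h2 hK0
      show U (polar t θ') ≤ K * pbar b s θ' t + (c + ε/2)
      linarith
  have hup : UcTheta b s U c θ' r ≤ c + ε/2 + D₁ * r := by
    have h5 := ucTheta_le_valid h hη hη1 hC0 hC hfin hθ' hM hc hr hvalid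
    have h6 : pbar b s θ' r ≤ r * eplus := pbar_small_upper h hη hη1 hC0 hC hfin hθ' hrη
    have h7 : K ≤ (A + 1 - c) / (δ'' * eminus) :=
      div_le_div_of_nonneg_left (by nlinarith) (by positivity) hpδ
    have h8 : K * pbar b s θ' r ≤ ((A + 1 - c) / (δ'' * eminus)) * (r * eplus) :=
      mul_le_mul h7 h6 (pbar_nonneg h hη hη1 hC0 hC hfin hθ' hr) (le_trans hK0 h7)
    have h9 : ((A + 1 - c) / (δ'' * eminus)) * (r * eplus) = D₁ * r := by
      rw [hD₁def]; ring
    linarith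
  -- lower bound via concavity chord from the endpoints
  have hlow : c - D₂ * r ≤ UcTheta b s U c θ' r := by
    rw [ucTheta_eq b s U c θ' r hr]
    refine le_csInf ⟨_, ucSet_nonempty h hη hη1 hC0 hC hfin hθ' hM hc r⟩ ?_
    rintro y ⟨ψ, hψ, rfl⟩
    have hP1 : 0 < pbar b s θ' 1 := pbar_one_pos h hη hη1 hC0 hC hfin hθ'
    set lam := pbar b s θ' r / pbar b s θ' 1 with hlamdef
    have hpr := pbar_mem_Icc h hη hη1 hC0 hC hfin hθ' hr
    have hlam0 : 0 ≤ lam := div_nonneg hpr.1 hP1.le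
    have hlam1 : lam ≤ 1 := (div_le_one hP1).2 hpr.2
    have hcc := hψ.2.1.2 (x := 0) (y := pbar b s θ' 1)
      ⟨le_rfl, hP1.le⟩ ⟨hP1.le, le_rfl⟩ (by linarith : (0:ℝ) ≤ 1 - lam) hlam0
      (by ring)
    have hcombo : (1 - lam) • (0:ℝ) + lam • pbar b s θ' 1 = pbar b s θ' r := by
      simp only [smul_eq_mul, mul_zero, zero_add]
      exact div_mul_cancel₀ _ hP1.ne'
    rw [hcombo] at hcc
    simp only [smul_eq_mul] at hcc
    have h1 : c ≤ ψ 0 := hψ.2.2.2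
    have h2 : -M ≤ ψ (pbar b s θ' 1) := by
      have := hψ.2.2.1 1 ⟨zero_le_one, le_rfl⟩
      have habs := abs_U_polar_le (θ := θ') hM (t := 1) ⟨zero_le_one, le_rfl⟩
      linarith [neg_abs_le (U (polar 1 θ'))]
    have h6 : pbar b s θ' r ≤ r * eplus := pbar_small_upper h hη hη1 hC0 hC hfin hθ' hrη
    have hlle : lam ≤ (r * eplus) / (η * eminus) := by
      rw [hlamdef]
      exact div_le_div₀ (mul_nonneg hr.1 heppos.le) h6 (by positivity)
        (eta_le_pbar_one h hη hη1 hC0 hC hfin hθ')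
    have hlamB : lam * B ≤ D₂ * r := by
      have h7 : lam * B ≤ ((r * eplus)/(η * eminus)) * B := mul_le_mul_of_nonneg_right hlle hB0
      have e : ((r * eplus)/(η * eminus)) * B = D₂ * r := by rw [hD₂def]; ring
      linarith
    have hcB : c + M ≤ B := le_max_right _ _
    have e1 : (1 - lam) * c ≤ (1 - lam) * ψ 0 := mul_le_mul_of_nonneg_left h1 (by linarith)
    have e2 : lam * (-M) ≤ lam * ψ (pbar b s θ' 1) := mul_le_mul_of_nonneg_left h2 hlam0
    have e3 : lam * (c + M) ≤ lam * B := mul_le_mul_of_nonneg_left hcB hlam0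
    have e4 : (1 - lam) * c + lam * (-M) = c - lam * (c + M) := by ring
    linarith [hcc, e1, e2, e3, hlamB, e4]
  have h10 : D₁ * r < ε/2 := by
    calc D₁ * r ≤ (D₁ + D₂ + 1) * r := by
          have := mul_le_mul_of_nonneg_right (show D₁ ≤ D₁ + D₂ + 1 by linarith) hr.1
          linarith
      _ < (D₁ + D₂ + 1) * (ε/(2*(D₁+D₂+1))) := by
          apply mul_lt_mul_of_pos_left hrsmall (by linarith)
      _ = ε/2 := cancel_aux (by linarith)
  have h11 : D₂ * r < ε/2 := by
    calc D₂ * r ≤ (D₁ + D₂ + 1) * r := by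
          have := mul_le_mul_of_nonneg_right (show D₂ ≤ D₁ + D₂ + 1 by linarith) hr.1
          linarith
      _ < (D₁ + D₂ + 1) * (ε/(2*(D₁+D₂+1))) := by
          apply mul_lt_mul_of_pos_left hrsmall (by linarith)
      _ = ε/2 := cancel_aux (by linarith)
  rw [abs_sub_lt_iff]
  constructor <;> linarith

end D1
lemma cancel_aux4 {a ε : ℝ} (ha : a ≠ 0) : a * (ε/(4*a)) = ε/4 := by
  field_simp

section D2
variable {b s : ℝ → ℝ → ℝ}
  (h : CondC (fun _ => (1:ℝ≥0∞)) b s)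
  {η C : ℝ} (hη : 0 < η) (hη1 : η < 1) (hC0 : 0 ≤ C)
  (hC : ∀ θ ∈ Ico (0:ℝ) (2 * Real.pi), ∀ r ∈ Ioc (0:ℝ) η,
        (1 + |b r θ|) / (s r θ) ^ 2 ≤ C)
  (hfin : ∀ θ ∈ Ico (0:ℝ) (2 * Real.pi), BddAbove (pscale b s θ '' Ico (0:ℝ) 1))
  {θ : ℝ} (hθ : θ ∈ Ico (0:ℝ) (2 * Real.pi))
  {U : EuclideanSpace ℝ (Fin 2) → ℝ} {M : ℝ}
  (hM : ∀ x : EuclideanSpace ℝ (Fin 2), ‖x‖ ≤ 1 → |U x| ≤ M)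
  {c : ℝ} (hc : U 0 ≤ c)
  (hU1 : ∀ ε > (0:ℝ), ∃ δ > (0:ℝ), δ ≤ 1/2 ∧ ∀ t ∈ Icc (0:ℝ) 1, 1 - t < δ →
    |U (polar t θ) - U (polar 1 θ)| < ε)
include h hη hη1 hC0 hC hfin hθ hM hc hU1

lemma boundary : ∀ ε > (0:ℝ), ∃ δ > (0:ℝ), ∀ r ∈ Icc (0:ℝ) 1, 1 - r < δ →
    |UcTheta b s U c θ r - U (polar 1 θ)| < ε := by
  intro ε hε
  obtain ⟨δb, hδb, hδbhalf, hU1'⟩ := hU1 (ε/4) (by linarith)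
  have hM0 : 0 ≤ M := M_nonneg hM
  have hU₁M : |U (polar 1 θ)| ≤ M := abs_U_polar_le hM ⟨zero_le_one, le_rfl⟩
  have hU₁low : -M ≤ U (polar 1 θ) := neg_le_of_abs_le hU₁M
  have hU₁up : U (polar 1 θ) ≤ M := le_of_abs_le hU₁M
  have hP1pos : 0 < pbar b s θ 1 := pbar_one_pos h hη hη1 hC0 hC hfin hθ
  have h1δ0 : (0:ℝ) ≤ 1 - δb := by linarith
  have h1δ1 : 1 - δb < 1 := by linarith
  have hΔpos : 0 < pbar b s θ 1 - pscale b s θ (1 - δb) := by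
    have := pbar_lt_pbar_one h hη hη1 hC0 hC hfin hθ h1δ0 h1δ1
    rw [pbar_of_lt h1δ1] at this
    linarith
  set Δ := pbar b s θ 1 - pscale b s θ (1 - δb) with hΔdef
  set A := max c M with hAdef
  have hcA : c ≤ A := le_max_left _ _
  have hMA : M ≤ A := le_max_right _ _
  have hA0 : 0 ≤ A := hM0.trans hMA
  set L := (A + 1 + M) / Δ with hLdef
  have hL0 : 0 ≤ L := div_nonneg (by linarith) hΔpos.le
  have hLΔ : L * Δ = A + 1 + M := div_mul_cancel₀ _ hΔpos.ne'
  have hΔP1 : Δ ≤ pbar b s θ 1 := by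
    have : 0 ≤ pscale b s θ (1 - δb) :=
      pscale_nonneg h hη hη1 hC0 hC hθ _ h1δ0 h1δ1
    rw [hΔdef]; linarith
  set ψ := fun x => min (A + 1 + ε/4) (U (polar 1 θ) + ε/4 + L * (pbar b s θ 1 - x))
    with hψdef
  have hvalid : Valid b s U c θ ψ := by
    refine ⟨?_, ?_, ?_, ?_⟩
    · exact (continuous_const.min (by fun_prop)).continuousOn
    · have h1 : ConcaveOn ℝ (Icc 0 (pbar b s θ 1)) (fun _ => A + 1 + ε/4) :=
        concaveOn_const _ (convex_Icc _ _)
      have h2 : ConcaveOn ℝ (Icc 0 (pbar b s θ 1))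
          (fun x => U (polar 1 θ) + ε/4 + L * (pbar b s θ 1 - x)) := by
        have hfun : (fun x => U (polar 1 θ) + ε/4 + L * (pbar b s θ 1 - x))
            = (fun x => (-L) * x + (U (polar 1 θ) + ε/4 + L * pbar b s θ 1)) := by
          funext x; ring
        rw [hfun]
        exact concaveOn_affine _ _ (convex_Icc _ _)
      exact h1.inf h2
    · intro t ht
      have hptP1 : pbar b s θ t ≤ pbar b s θ 1 :=
        pbar_le_pbar_one hfin hθ ht
      rcases le_or_gt t (1 - δb) with htle | htgt
      · have hpt : pbar b s θ t ≤ pscale b s θ (1 - δb) := by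
          rw [← pbar_of_lt (b := b) (s := s) (θ := θ) h1δ1]
          exact pbar_mono h hη hη1 hC0 hC hfin hθ ht.1 htle h1δ1.le
        have hbr2 : A + 1 + ε/4 ≤
            U (polar 1 θ) + ε/4 + L * (pbar b s θ 1 - pbar b s θ t) := by
          have hd : Δ ≤ pbar b s θ 1 - pbar b s θ t := by rw [hΔdef]; linarith
          have := mul_le_mul_of_nonneg_left hd hL0
          linarith
        have hU : U (polar t θ) ≤ M := le_of_abs_le (abs_U_polar_le hM ht)
        refine le_min (by linarith) (by linarith)
      · have hUt := hU1' t ht (by linarith)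
        have h1 : U (polar t θ) ≤ U (polar 1 θ) + ε/4 := by
          have := abs_sub_lt_iff.1 hUt
          linarith [this.1]
        have hU : U (polar t θ) ≤ M := le_of_abs_le (abs_U_polar_le hM ht)
        refine le_min (by linarith) ?_
        have := mul_nonneg hL0 (by linarith : (0:ℝ) ≤ pbar b s θ 1 - pbar b s θ t)
        linarith
    · have hb2 : c ≤ U (polar 1 θ) + ε/4 + L * (pbar b s θ 1 - 0) := by
        have := mul_le_mul_of_nonneg_left hΔP1 hL0
        linarith
      exact le_min (by linarith) hb2
  obtain ⟨t₀, ht₀, hpt₀⟩ := pbar_sup_approx h hη hη1 hC0 hC hfin hθ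
    (show (0:ℝ) < ε/(4*(L+1)) by positivity)
  refine ⟨min δb (1 - t₀), lt_min hδb (by linarith [ht₀.2]), ?_⟩
  intro r hr hrδ
  have hrδb : 1 - r < δb := lt_of_lt_of_le hrδ (min_le_left _ _)
  have hrt₀ : t₀ ≤ r := by
    have := lt_of_lt_of_le hrδ (min_le_right _ _)
    linarith
  have hprt₀ : pscale b s θ t₀ ≤ pbar b s θ r := by
    rw [← pbar_of_lt (b := b) (s := s) (θ := θ) ht₀.2]
    exact pbar_mono h hη hη1 hC0 hC hfin hθ ht₀.1 hrt₀ hr.2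
  have hgap : pbar b s θ 1 - pbar b s θ r ≤ ε/(4*(L+1)) := by linarith
  have hup : UcTheta b s U c θ r ≤ U (polar 1 θ) + ε/2 := by
    have h5 := ucTheta_le_valid h hη hη1 hC0 hC hfin hθ hM hc hr hvalid
    have h6 : ψ (pbar b s θ r) ≤
        U (polar 1 θ) + ε/4 + L * (pbar b s θ 1 - pbar b s θ r) := min_le_right _ _
    have h7 : L * (pbar b s θ 1 - pbar b s θ r) ≤ ε/4 := by
      have h8 := mul_le_mul_of_nonneg_left hgap hL0
      have h9 : L * (ε/(4*(L+1))) ≤ (L+1) * (ε/(4*(L+1))) := by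
        apply mul_le_mul_of_nonneg_right (by linarith) (by positivity)
      have h10 : (L+1) * (ε/(4*(L+1))) = ε/4 := cancel_aux4 (by linarith)
      linarith
    linarith
  have hlow : U (polar 1 θ) - ε/4 ≤ UcTheta b s U c θ r := by
    rw [ucTheta_eq b s U c θ r hr]
    refine le_csInf ⟨_, ucSet_nonempty h hη hη1 hC0 hC hfin hθ hM hc r⟩ ?_
    rintro y ⟨ψ', hψ', rfl⟩
    have h1 := hψ'.2.2.1 r hr
    have h2 := hU1' r hr hrδb
    have := abs_sub_lt_iff.1 h2
    linarith [this.2]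
  rw [abs_sub_lt_iff]
  constructor <;> linarith

lemma ucTheta_one : UcTheta b s U c θ 1 = U (polar 1 θ) := by
  by_contra hne
  have hd : 0 < |UcTheta b s U c θ 1 - U (polar 1 θ)| := abs_pos.2 (sub_ne_zero.2 hne)
  obtain ⟨δ, hδ, hb⟩ := boundary h hη hη1 hC0 hC hfin hθ hM hc hU1 _ hd
  exact absurd (hb 1 ⟨zero_le_one, le_rfl⟩ (by linarith)) (lt_irrefl _)

end D2
section D3
variable {b s : ℝ → ℝ → ℝ}
  (h : CondC (fun _ => (1:ℝ≥0∞)) b s)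
  {η C : ℝ} (hη : 0 < η) (hη1 : η < 1) (hC0 : 0 ≤ C)
  (hC : ∀ θ ∈ Ico (0:ℝ) (2 * Real.pi), ∀ r ∈ Ioc (0:ℝ) η,
        (1 + |b r θ|) / (s r θ) ^ 2 ≤ C)
  (hfin : ∀ θ ∈ Ico (0:ℝ) (2 * Real.pi), BddAbove (pscale b s θ '' Ico (0:ℝ) 1))
  {θ : ℝ} (hθ : θ ∈ Ico (0:ℝ) (2 * Real.pi))
  {U : EuclideanSpace ℝ (Fin 2) → ℝ} {M : ℝ}
  (hM : ∀ x : EuclideanSpace ℝ (Fin 2), ‖x‖ ≤ 1 → |U x| ≤ M)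
  {c : ℝ} (hc : U 0 ≤ c)
include h hη hη1 hC0 hC hfin hθ hM hc

lemma interior_cont (r₀ : ℝ) (hr₀ : r₀ ∈ Ioo (0:ℝ) 1) :
    ∀ ε > (0:ℝ), ∃ δ > (0:ℝ), ∀ r ∈ Icc (0:ℝ) 1, |r - r₀| < δ →
      |UcTheta b s U c θ r - UcTheta b s U c θ r₀| < ε := by
  intro ε hε
  have hr₀Icc : r₀ ∈ Icc (0:ℝ) 1 := ⟨hr₀.1.le, hr₀.2.le⟩
  have hpbr₀ : pbar b s θ r₀ = pscale b s θ r₀ := pbar_of_lt hr₀.2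
  have hx₀pos : 0 < pscale b s θ r₀ := by
    have := pscale_strict_mono h hη hη1 hC0 hC hθ 0 r₀ le_rfl hr₀.1 hr₀.2
    rwa [pscale_zero (b := b) (s := s) (θ := θ)] at this
  have hx₀lt : pscale b s θ r₀ < pbar b s θ 1 := by
    have := pbar_lt_pbar_one h hη hη1 hC0 hC hfin hθ hr₀.1.le hr₀.2
    rwa [hpbr₀] at this
  set x₀ := pscale b s θ r₀ with hx₀def
  set P1 := pbar b s θ 1 with hP1def
  set d := min x₀ (P1 - x₀) with hddef
  have hd : 0 < d := lt_min hx₀pos (by linarith)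
  have hdx₀ : d ≤ x₀ := min_le_left _ _
  have hdP1 : d ≤ P1 - x₀ := min_le_right _ _
  set m₀ := min c (-M) with hm₀def
  set A := max c M with hAdef
  have hm₀c : m₀ ≤ c := min_le_left _ _
  have hm₀M : m₀ ≤ -M := min_le_right _ _
  have hcA : c ≤ A := le_max_left _ _
  have hMA : M ≤ A := le_max_right _ _
  have hm₀A : m₀ ≤ A + 1 := by linarith
  set E := (A + 1 - m₀) / (d/2) with hEdef
  have hE0 : 0 ≤ E := div_nonneg (by linarith) (by linarith)
  set ρ := min (d/2) (ε/(2*(E+1))) with hρdef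
  have hρ : 0 < ρ := lt_min (by linarith) (div_pos hε (by linarith))
  have hρd : ρ ≤ d/2 := min_le_left _ _
  have hρε : ρ ≤ ε/(2*(E+1)) := min_le_right _ _
  set m := (1 + r₀)/2 with hmdef
  have hm1 : m < 1 := by rw [hmdef]; linarith [hr₀.2]
  have hm0 : 0 ≤ m := by rw [hmdef]; linarith [hr₀.1]
  have hr₀m : r₀ ∈ Icc (0:ℝ) m := ⟨hr₀.1.le, by rw [hmdef]; linarith [hr₀.2]⟩
  have hcont := pscale_cont h hη hη1 hC0 hC hθ m hm0 hm1 r₀ hr₀m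
  rw [Metric.continuousWithinAt_iff] at hcont
  obtain ⟨δ₂, hδ₂, hcw⟩ := hcont ρ hρ
  refine ⟨min δ₂ ((1 - r₀)/2), lt_min hδ₂ (by linarith [hr₀.2]), ?_⟩
  intro r hr hrδ
  have hrδ₂ : |r - r₀| < δ₂ := lt_of_lt_of_le hrδ (min_le_left _ _)
  have hrhalf : |r - r₀| < (1 - r₀)/2 := lt_of_lt_of_le hrδ (min_le_right _ _)
  have hrm : r ∈ Icc (0:ℝ) m := by
    refine ⟨hr.1, ?_⟩
    have := (abs_sub_lt_iff.1 hrhalf).1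
    rw [hmdef]; linarith
  have hr1 : r < 1 := lt_of_le_of_lt hrm.2 hm1
  have hpbr : pbar b s θ r = pscale b s θ r := pbar_of_lt hr1
  have hxr : |pscale b s θ r - x₀| < ρ := by
    have := hcw hrm (by rwa [Real.dist_eq])
    rwa [Real.dist_eq] at this
  -- generic bound for the chord error term
  have hkey : ∀ u mn : ℝ, |u| ≤ ρ → d/2 ≤ mn → |u| * (A + 1 - m₀) / mn ≤ ε/2 := by
    intro u mn hu hmn
    have hmn0 : 0 < mn := lt_of_lt_of_le (by linarith) hmn
    have h1 : |u| * (A + 1 - m₀) / mn ≤ |u| * (A + 1 - m₀) / (d/2) := by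
      apply div_le_div_of_nonneg_left (mul_nonneg (abs_nonneg _) (by linarith)) (by linarith) hmn
    have h2 : |u| * (A + 1 - m₀) / (d/2) = |u| * E := by
      rw [hEdef]; ring
    have h3 : |u| * E ≤ ρ * E := mul_le_mul_of_nonneg_right hu hE0
    have h4 : ρ * E ≤ (ε/(2*(E+1))) * (E+1) := by
      have := mul_le_mul hρε (show E ≤ E + 1 by linarith) hE0 (div_nonneg hε.le (by linarith))
      linarith
    have h5 : (ε/(2*(E+1))) * (E+1) = ε/2 := by
      rw [mul_comm]
      exact cancel_aux (by linarith)
    linarith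
  have hFr₀A : UcTheta b s U c θ r₀ ≤ A :=
    ucTheta_le_max h hη hη1 hC0 hC hfin hθ hM hc hr₀Icc
  have hFrA : UcTheta b s U c θ r ≤ A :=
    ucTheta_le_max h hη hη1 hC0 hC hfin hθ hM hc hr
  have hpbrIcc : pbar b s θ r ∈ Icc 0 P1 := pbar_mem_Icc h hη hη1 hC0 hC hfin hθ hr
  have hx₀Icc : x₀ ∈ Icc 0 P1 := ⟨hx₀pos.le, hx₀lt.le⟩
  have hminpos : 0 < min (ε/2) 1 := lt_min (by linarith) one_pos
  have hmin2 : min (ε/2) 1 ≤ ε/2 := min_le_left _ _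
  -- part 1 : F r < F r₀ + ε
  have hpart1 : UcTheta b s U c θ r < UcTheta b s U c θ r₀ + ε := by
    obtain ⟨ψ, hψ, hlt⟩ := exists_valid_lt h hη hη1 hC0 hC hfin hθ hM hc hr₀Icc hminpos
    rw [hpbr₀] at hlt
    have hψ0 : m₀ ≤ ψ 0 :=
      valid_lb h hη hη1 hC0 hC hfin hθ hM hc hψ ⟨le_rfl, by linarith⟩
    have hψL : m₀ ≤ ψ P1 :=
      valid_lb h hη hη1 hC0 hC hfin hθ hM hc hψ ⟨by linarith, le_rfl⟩
    have hxA : ψ x₀ ≤ A + 1 := by linarith [hlt, hFr₀A, min_le_right (ε/2) (1:ℝ)]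
    have hch := chord_bound hψ.2.1 hψ0 hψL (x := x₀) (y := pbar b s θ r)
      ⟨hx₀pos, hx₀lt⟩ hpbrIcc hxA hm₀A
    have hterm := hkey (pbar b s θ r - x₀) (min x₀ (P1 - x₀)) (by rw [hpbr]; exact hxr.le)
      (by rw [hddef]; linarith)
    have hFr := ucTheta_le_valid h hη hη1 hC0 hC hfin hθ hM hc hr hψ
    have hmin1 : min (ε/2) 1 ≤ ε/2 := min_le_left _ _
    linarith
  -- part 2 : F r₀ < F r + ε
  have hpart2 : UcTheta b s U c θ r₀ < UcTheta b s U c θ r + ε := by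
    obtain ⟨ψ, hψ, hlt⟩ := exists_valid_lt h hη hη1 hC0 hC hfin hθ hM hc hr hminpos
    have hψ0 : m₀ ≤ ψ 0 :=
      valid_lb h hη hη1 hC0 hC hfin hθ hM hc hψ ⟨le_rfl, by linarith⟩
    have hψL : m₀ ≤ ψ P1 :=
      valid_lb h hη hη1 hC0 hC hfin hθ hM hc hψ ⟨by linarith, le_rfl⟩
    have hxA : ψ (pbar b s θ r) ≤ A + 1 := by linarith [hlt, hFrA, min_le_right (ε/2) (1:ℝ)]
    have habs := abs_sub_lt_iff.1 hxr
    have hxmem : pbar b s θ r ∈ Ioo 0 P1 := by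
      rw [hpbr]
      constructor
      · have : x₀ - d/2 ≤ pscale b s θ r := by
          have := habs.2
          linarith [hρd]
        linarith
      · have : pscale b s θ r ≤ x₀ + d/2 := by
          have := habs.1
          linarith [hρd]
        linarith
    have hmnge : d/2 ≤ min (pbar b s θ r) (P1 - pbar b s θ r) := by
      rw [hpbr]
      refine le_min ?_ ?_
      · have := habs.2; linarith [hρd, hdx₀]
      · have := habs.1; linarith [hρd, hdP1]
    have hch := chord_bound hψ.2.1 hψ0 hψL (x := pbar b s θ r) (y := x₀)
      hxmem hx₀Icc hxA hm₀A
    have hterm := hkey (x₀ - pbar b s θ r) (min (pbar b s θ r) (P1 - pbar b s θ r))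
      (by rw [hpbr, abs_sub_comm]; exact hxr.le) hmnge
    have hFr₀ : UcTheta b s U c θ r₀ ≤ ψ x₀ := by
      have := ucTheta_le_valid h hη hη1 hC0 hC hfin hθ hM hc hr₀Icc hψ
      rwa [hpbr₀] at this
    linarith
  rw [abs_sub_lt_iff]
  constructor <;> linarith

end D3
/-- Under Condition (C) with `ℓ ≡ 1` and `p_θ(1−) < ∞` for every `θ`: for a bounded,
Borel, tree-continuous reward `U` on the closed unit disc and `c ≥ U(0)`, the ray-wise
smallest `p`-concave majorant `U⁽ᶜ⁾` is continuous on the closed disc in the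
tree-topology; in particular `U⁽ᶜ⁾(0) = c`, `U⁽ᶜ⁾(1,θ) = U(1,θ)` for every `θ`, and
`sup_θ |U⁽ᶜ⁾_θ(r) − c| → 0` as `r ↓ 0`. -/
theorem UcDisc_tree_continuous (b s : ℝ → ℝ → ℝ)
    (h : CondC (fun _ => (1 : ℝ≥0∞)) b s)
    (hfin : ∀ θ ∈ Ico (0:ℝ) (2 * Real.pi), BddAbove (pscale b s θ '' Ico (0:ℝ) 1))
    (U : EuclideanSpace ℝ (Fin 2) → ℝ)
    (hUmeas : Measurable (Set.restrict {x : EuclideanSpace ℝ (Fin 2) | ‖x‖ ≤ 1} U))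
    (hUbdd : ∃ M : ℝ, ∀ x : EuclideanSpace ℝ (Fin 2), ‖x‖ ≤ 1 → |U x| ≤ M)
    (hUcont : ∀ x : EuclideanSpace ℝ (Fin 2), ‖x‖ ≤ 1 → ∀ ε > (0:ℝ), ∃ δ > (0:ℝ),
      ∀ y : EuclideanSpace ℝ (Fin 2), ‖y‖ ≤ 1 → treeDist x y < δ → |U y - U x| < ε)
    (c : ℝ) (hc : U 0 ≤ c) :
    (∀ x : EuclideanSpace ℝ (Fin 2), ‖x‖ ≤ 1 → ∀ ε > (0:ℝ), ∃ δ > (0:ℝ),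
      ∀ y : EuclideanSpace ℝ (Fin 2), ‖y‖ ≤ 1 → treeDist x y < δ →
        |UcDisc b s U c y - UcDisc b s U c x| < ε) ∧
    UcDisc b s U c 0 = c ∧
    (∀ θ ∈ Ico (0:ℝ) (2 * Real.pi), UcTheta b s U c θ 1 = U (polar 1 θ)) ∧
    (∀ ε > (0:ℝ), ∃ δ > (0:ℝ), ∀ r ∈ Ioo (0:ℝ) δ, ∀ θ ∈ Ico (0:ℝ) (2 * Real.pi),
      |UcTheta b s U c θ r - c| < ε) := by
  obtain ⟨η, C, hη, hη1, hC0, hC⟩ := exists_etaC h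
  obtain ⟨M, hM⟩ := hUbdd
  -- uniform continuity of U at the origin along rays
  have hU0 : ∀ ε > (0:ℝ), ∃ δ > (0:ℝ), ∀ θ' : ℝ, ∀ t ∈ Icc (0:ℝ) 1, t < δ →
      |U (polar t θ') - U 0| < ε := by
    intro ε hε
    obtain ⟨δ, hδ, hcont⟩ := hUcont 0 (by simp) ε hε
    refine ⟨δ, hδ, ?_⟩
    intro θ' t ht htδ
    have hnorm : ‖polar t θ'‖ = t := by rw [norm_polar, abs_of_nonneg ht.1]
    have htd : treeDist 0 (polar t θ') < δ := by
      rw [treeDist, if_pos (show OnSameRay 0 (polar t θ') from Or.inl rfl), norm_zero, zero_sub, abs_neg, abs_norm, hnorm]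
      exact htδ
    exact hcont _ (by rw [hnorm]; exact ht.2) htd
  -- continuity of U at the boundary point of each ray
  have hU1 : ∀ θ ∈ Ico (0:ℝ) (2 * Real.pi), ∀ ε > (0:ℝ), ∃ δ > (0:ℝ), δ ≤ 1/2 ∧
      ∀ t ∈ Icc (0:ℝ) 1, 1 - t < δ → |U (polar t θ) - U (polar 1 θ)| < ε := by
    intro θ hθ ε hε
    have hn1 : ‖polar 1 θ‖ = 1 := by rw [norm_polar]; norm_num
    obtain ⟨δ, hδ, hcont⟩ := hUcont (polar 1 θ) (le_of_eq hn1) ε hε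
    refine ⟨min δ (1/2), lt_min hδ (by norm_num), min_le_right _ _, ?_⟩
    intro t ht htδ
    have ht2 : 1 - t < 1/2 := lt_of_lt_of_le htδ (min_le_right _ _)
    have htpos : 0 < t := by linarith
    have hray : OnSameRay (polar 1 θ) (polar t θ) := by
      refine Or.inr (Or.inr ⟨t, htpos, ?_⟩)
      rw [smul_polar, mul_one]
    have hnt : ‖polar t θ‖ = t := by rw [norm_polar, abs_of_nonneg ht.1]
    have htd : treeDist (polar 1 θ) (polar t θ) < δ := by
      rw [treeDist, if_pos hray, hn1, hnt, abs_of_nonneg (by linarith [ht.2] : (0:ℝ) ≤ 1 - t)]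
      exact lt_of_lt_of_le htδ (min_le_left _ _)
    exact hcont _ (by rw [hnt]; exact ht.2) htd
  -- the value at the origin
  have h0eq : ∀ θ₀ ∈ Ico (0:ℝ) (2 * Real.pi), UcTheta b s U c θ₀ 0 = c := by
    intro θ₀ hθ₀
    by_contra hne
    have hd := abs_pos.2 (sub_ne_zero.2 hne)
    obtain ⟨δ, hδ, _, hnz⟩ := near_zero h hη hη1 hC0 hC hfin hM hc hU0 _ hd
    exact absurd (hnz θ₀ hθ₀ 0 ⟨le_rfl, zero_le_one⟩ hδ) (lt_irrefl _)
  have hdisc0 : UcDisc b s U c 0 = c := by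
    show UcTheta b s U c (argOf 0) ‖(0 : EuclideanSpace ℝ (Fin 2))‖ = c
    rw [norm_zero]
    exact h0eq _ (argOf_mem 0)
  refine ⟨?_, hdisc0, ?_, ?_⟩
  · -- tree-continuity on the closed disc
    intro x hx ε hε
    by_cases hx0 : x = 0
    · subst hx0
      obtain ⟨δ, hδ, hδ1, hnz⟩ := near_zero h hη hη1 hC0 hC hfin hM hc hU0 ε hε
      refine ⟨δ, hδ, ?_⟩
      intro y hy htd
      rw [treeDist, if_pos (show OnSameRay 0 y from Or.inl rfl), norm_zero, zero_sub, abs_neg, abs_norm] at htd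
      rw [hdisc0]
      exact hnz (argOf y) (argOf_mem y) ‖y‖ ⟨norm_nonneg _, hy⟩ htd
    · have hr₀pos : 0 < ‖x‖ := norm_pos_iff.2 hx0
      rcases eq_or_lt_of_le hx with h1 | hlt
      · -- boundary point
        obtain ⟨δ', hδ', hbd⟩ := boundary h hη hη1 hC0 hC hfin (argOf_mem x) hM hc
          (hU1 _ (argOf_mem x)) ε hε
        have h1eq : UcTheta b s U c (argOf x) 1 = U (polar 1 (argOf x)) :=
          ucTheta_one h hη hη1 hC0 hC hfin (argOf_mem x) hM hc (hU1 _ (argOf_mem x))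
        refine ⟨min δ' ‖x‖, lt_min hδ' hr₀pos, ?_⟩
        intro y hy htd
        have hδx : min δ' ‖x‖ ≤ ‖x‖ := min_le_right _ _
        have hray : OnSameRay x y := by
          by_contra hnr
          rw [treeDist, if_neg hnr] at htd
          have := norm_nonneg y
          linarith
        rw [treeDist, if_pos hray] at htd
        rcases hray with h0 | h0 | ⟨t, ht, hyt⟩
        · exact absurd h0 hx0
        · rw [h0, norm_zero, sub_zero, abs_of_pos hr₀pos] at htd
          linarith
        · have harg : argOf y = argOf x := by rw [hyt]; exact argOf_smul t ht x
          show |UcTheta b s U c (argOf y) ‖y‖ - UcTheta b s U c (argOf x) ‖x‖| < ε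
          rw [harg, h1, h1eq]
          refine hbd ‖y‖ ⟨norm_nonneg _, hy⟩ ?_
          rw [h1] at htd
          have h2 := (abs_sub_lt_iff.1 htd).1
          have h3 : min δ' (1:ℝ) ≤ δ' := min_le_left _ _
          linarith
      · -- interior point
        obtain ⟨δ', hδ', hic⟩ := interior_cont h hη hη1 hC0 hC hfin (argOf_mem x) hM hc
          ‖x‖ ⟨hr₀pos, hlt⟩ ε hε
        refine ⟨min δ' ‖x‖, lt_min hδ' hr₀pos, ?_⟩
        intro y hy htd
        have hδx : min δ' ‖x‖ ≤ ‖x‖ := min_le_right _ _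
        have hray : OnSameRay x y := by
          by_contra hnr
          rw [treeDist, if_neg hnr] at htd
          have := norm_nonneg y
          linarith
        rw [treeDist, if_pos hray] at htd
        rcases hray with h0 | h0 | ⟨t, ht, hyt⟩
        · exact absurd h0 hx0
        · rw [h0, norm_zero, sub_zero, abs_of_pos hr₀pos] at htd
          linarith
        · have harg : argOf y = argOf x := by rw [hyt]; exact argOf_smul t ht x
          show |UcTheta b s U c (argOf y) ‖y‖ - UcTheta b s U c (argOf x) ‖x‖| < ε
          rw [harg]
          refine hic ‖y‖ ⟨norm_nonneg _, hy⟩ ?_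
          have h3 : min δ' ‖x‖ ≤ δ' := min_le_left _ _
          rw [abs_sub_comm] at htd
          linarith
  · -- boundary values
    intro θ hθ
    exact ucTheta_one h hη hη1 hC0 hC hfin hθ hM hc (hU1 θ hθ)
  · -- uniform convergence to c near the origin
    intro ε hε
    obtain ⟨δ, hδ, hδ1, hnz⟩ := near_zero h hη hη1 hC0 hC hfin hM hc hU0 ε hε
    refine ⟨δ, hδ, ?_⟩
    intro r hr θ hθ
    exact hnz θ hθ r ⟨hr.1.le, by linarith [hr.2]⟩ hr.2
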